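/- If M : [0,1]^k → ℝ is multiplicative on [0,1]^k and additive on D_k, then either M is identically zero or M is a coordinate projection, i.e., there exists an index j ∈ {1,…,k} such that M(x₁,…,x_k) = x_j for all x ∈ [0,1]^k. -/

import Mathlib

open Finset

/-- `M : [0,1]^k → ℝ` is multiplicative: `M (x*y) = M x * M y` (componentwise product). -/
def IsMultiplicative (k : ℕ) (M : (Fin k → ℝ) → ℝ) : Prop :=
  ∀ x ∈ Set.Icc (0 : Fin k → ℝ) 1, ∀ y ∈ Set.Icc (0 : Fin k → ℝ) 1,
    M (x * y) = M x * M y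

/-- membership of the pair `(x, y)` in `D_k`: `x, y ∈ [0,1)^k` and `x + y ≤ 1`. -/
def MemD (k : ℕ) (x y : Fin k → ℝ) : Prop :=
  (∀ i, 0 ≤ x i ∧ x i < 1) ∧ (∀ i, 0 ≤ y i ∧ y i < 1) ∧ x + y ≤ 1

/-- `A : [0,1]^k → ℝ` is additive on `D_k`. -/
def IsAdditiveOnD (k : ℕ) (A : (Fin k → ℝ) → ℝ) : Prop :=
  ∀ x y : Fin k → ℝ, MemD k x y → A (x + y) = A x + A y

set_option maxHeartbeats 1000000 in
/-- If `M` is multiplicative on `[0,1]^k` and additive on `D_k`, then `M` is identically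
zero on `[0,1]^k` or a coordinate projection there. -/
theorem stmt_0 (k : ℕ) (hk : 0 < k) (M : (Fin k → ℝ) → ℝ)
    (hmul : IsMultiplicative k M) (hadd : IsAdditiveOnD k M) :
    (∀ x ∈ Set.Icc (0 : Fin k → ℝ) 1, M x = 0) ∨
      ∃ j : Fin k, ∀ x ∈ Set.Icc (0 : Fin k → ℝ) 1, M x = x j := by
  classical
  have hmem : ∀ x : Fin k → ℝ, (∀ i, 0 ≤ x i) → (∀ i, x i ≤ 1) →
      x ∈ Set.Icc (0 : Fin k → ℝ) 1 := by
    intro x h0 h1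
    exact ⟨fun i => h0 i, fun i => h1 i⟩
  have h1mem : (1 : Fin k → ℝ) ∈ Set.Icc (0 : Fin k → ℝ) 1 :=
    hmem 1 (fun i => zero_le_one) (fun i => le_refl 1)
  -- nonnegativity
  have hnonneg : ∀ x ∈ Set.Icc (0 : Fin k → ℝ) 1, 0 ≤ M x := by
    intro x hx
    have h0 : ∀ i, 0 ≤ x i := fun i => hx.1 i
    have h1 : ∀ i, x i ≤ 1 := fun i => hx.2 i
    set y : Fin k → ℝ := fun i => Real.sqrt (x i) with hy
    have hyI : y ∈ Set.Icc (0 : Fin k → ℝ) 1 :=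
      hmem y (fun i => Real.sqrt_nonneg _) (fun i => Real.sqrt_le_one.mpr (h1 i))
    have hmm : M (y * y) = M y * M y := hmul y hyI y hyI
    have hyy : y * y = x := funext fun i => Real.mul_self_sqrt (h0 i)
    rw [hyy] at hmm
    rw [hmm]
    exact mul_self_nonneg _
  -- M 1 ∈ {0, 1}
  have hM1sq : M (1 : Fin k → ℝ) * M 1 = M 1 := by
    have := hmul 1 h1mem 1 h1mem
    rw [one_mul] at this
    linarith [this]
  have hM1 : M (1 : Fin k → ℝ) = 0 ∨ M (1 : Fin k → ℝ) = 1 := by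
    have hfac : M 1 * (M 1 - 1) = 0 := by ring_nf; linarith [hM1sq]
    rcases mul_eq_zero.mp hfac with h | h
    · exact Or.inl h
    · right; linarith
  rcases hM1 with hM1 | hM1
  · -- M ≡ 0
    left
    intro x hx
    have := hmul x hx 1 h1mem
    rw [mul_one, hM1, mul_zero] at this
    exact this
  · -- M 1 = 1
    right
    set f : ℝ → ℝ := fun t => M (fun _ => t) with hf
    have cmem : ∀ {t : ℝ}, 0 ≤ t → t ≤ 1 →
        (fun _ : Fin k => t) ∈ Set.Icc (0 : Fin k → ℝ) 1 :=
      fun h0 h1 => hmem _ (fun i => h0) (fun i => h1)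
    have hone : (fun _ : Fin k => (1:ℝ)) = (1 : Fin k → ℝ) := rfl
    have f1 : f 1 = 1 := by rw [hf]; simp only; rw [hone]; exact hM1
    have fmul : ∀ s t : ℝ, 0 ≤ s → s ≤ 1 → 0 ≤ t → t ≤ 1 →
        f (s * t) = f s * f t := by
      intro s t hs0 hs1 ht0 ht1
      have := hmul _ (cmem hs0 hs1) _ (cmem ht0 ht1)
      exact this
    have fnonneg : ∀ t : ℝ, 0 ≤ t → t ≤ 1 → 0 ≤ f t := by
      intro t h0 h1
      exact hnonneg _ (cmem h0 h1)
    have fadd : ∀ s t : ℝ, 0 ≤ s → s < 1 → 0 ≤ t → t < 1 → s + t ≤ 1 →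
        f (s + t) = f s + f t := by
      intro s t hs0 hs1 ht0 ht1 hst
      have := hadd (fun _ => s) (fun _ => t)
        ⟨fun i => ⟨hs0, hs1⟩, fun i => ⟨ht0, ht1⟩, fun i => hst⟩
      exact this
    have f0 : f 0 = 0 := by
      have := fadd 0 0 le_rfl one_pos le_rfl one_pos (by norm_num)
      rw [add_zero] at this
      linarith
    have fhalf : ∀ s : ℝ, 0 ≤ s → s ≤ 1 → f (s / 2) = f s / 2 := by
      intro s h0 h1
      have := fadd (s/2) (s/2) (by linarith) (by linarith) (by linarith) (by linarith)
        (by linarith)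
      have hs : s/2 + s/2 = s := by ring
      rw [hs] at this
      linarith
    have fdy1 : ∀ n : ℕ, f (1 / 2 ^ n) = 1 / 2 ^ n := by
      intro n
      induction n with
      | zero => simpa using f1
      | succ n ih =>
        have h2n : (1:ℝ) ≤ 2 ^ n := one_le_pow₀ (by norm_num)
        have hle : (1:ℝ) / 2 ^ n ≤ 1 := by
          rw [div_le_one (by positivity)]; exact h2n
        have := fhalf (1 / 2 ^ n) (by positivity) hle
        have heq : (1:ℝ) / 2 ^ n / 2 = 1 / 2 ^ (n+1) := by
          rw [pow_succ]; ring
        rw [heq, ih, heq] at this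
        exact this
    have fdy : ∀ n : ℕ, ∀ m : ℕ, m ≤ 2 ^ n → f (m / 2 ^ n) = m / 2 ^ n := by
      intro n m
      induction m with
      | zero => intro _; simpa using f0
      | succ m ih =>
        intro hm
        rcases Nat.eq_zero_or_pos n with hn | hn
        · subst hn
          have hm0 : m = 0 := by simpa using hm
          subst hm0
          norm_num [f1]
        · have hmlt : m < 2 ^ n := lt_of_lt_of_le (Nat.lt_succ_self m) hm
          have hmlt' : (m:ℝ) < 2 ^ n := by exact_mod_cast hmlt
          have h2n : (1:ℝ) < 2 ^ n := by
            have : (1:ℕ) < 2 ^ n := Nat.one_lt_two_pow_iff.mpr (by omega)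
            exact_mod_cast this
          have hpos : (0:ℝ) < 2 ^ n := by positivity
          have hsum : ((m:ℝ) + 1) / 2 ^ n ≤ 1 := by
            rw [div_le_one hpos]
            have : ((m:ℝ) + 1) ≤ 2 ^ n := by exact_mod_cast hm
            linarith
          have hAdd := fadd (m / 2 ^ n) (1 / 2 ^ n) (by positivity)
            ((div_lt_one hpos).mpr hmlt') (by positivity)
            ((div_lt_one hpos).mpr h2n) (by rw [← add_div]; exact hsum)
          rw [← add_div] at hAdd
          have hcast : ((m + 1 : ℕ) : ℝ) / 2 ^ n = ((m:ℝ) + 1) / 2 ^ n := by push_cast; ring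
          rw [hcast, hAdd, ih (le_of_lt hmlt), fdy1]
          ring
    have fmono : ∀ s t : ℝ, 0 ≤ s → s ≤ t → t ≤ 1 → s < 1 → t - s < 1 →
        f s ≤ f t := by
      intro s t hs0 hst ht1 hs1 hts
      have hAdd := fadd s (t - s) hs0 hs1 (by linarith) hts (by linarith)
      have : s + (t - s) = t := by ring
      rw [this] at hAdd
      have := fnonneg (t - s) (by linarith) (by linarith)
      linarith
    have fid : ∀ s : ℝ, 0 ≤ s → s ≤ 1 → f s = s := by
      intro s hs0 hs1
      rcases eq_or_lt_of_le hs1 with h | hlt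
      · rw [h, f1]
      have key : ∀ ε : ℝ, 0 < ε → f s ≤ s + ε ∧ s ≤ f s + ε := by
        intro ε hε
        obtain ⟨n, hn⟩ := exists_pow_lt_of_lt_one hε (by norm_num : (1:ℝ)/2 < 1)
        set N := n + 1 with hN
        have hpow2 : ((1:ℝ)/2) ^ N = 1 / 2 ^ N := by rw [div_pow, one_pow]
        have hpow : (1:ℝ) / 2 ^ N < ε := by
          have h1 : ((1:ℝ)/2) ^ N ≤ ((1:ℝ)/2) ^ n :=
            pow_le_pow_of_le_one (by norm_num) (by norm_num) (Nat.le_succ n)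
          rw [← hpow2]; linarith
        have hpos : (0:ℝ) < 2 ^ N := by positivity
        have hNbig : (2:ℝ) ≤ 2 ^ N := by
          calc (2:ℝ) = 2 ^ 1 := (pow_one 2).symm
          _ ≤ 2 ^ N := pow_le_pow_right₀ (by norm_num) (by omega)
        have hhalf : (1:ℝ) / 2 ^ N ≤ 1 / 2 := by
          apply div_le_div_of_nonneg_left (by norm_num) (by norm_num) hNbig
        constructor
        · -- upper bound via ceiling
          set m := ⌈s * 2 ^ N⌉₊ with hm
          have hmle : m ≤ 2 ^ N := by
            apply Nat.ceil_le.mpr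
            push_cast
            nlinarith
          have hsled : s ≤ (m:ℝ) / 2 ^ N := by
            rw [le_div_iff₀ hpos]
            exact Nat.le_ceil _
          have hdlt : (m:ℝ) / 2 ^ N < s + 1 / 2 ^ N := by
            rw [div_lt_iff₀ hpos]
            have := Nat.ceil_lt_add_one (show (0:ℝ) ≤ s * 2 ^ N by positivity)
            calc (m:ℝ) < s * 2 ^ N + 1 := this
            _ = (s + 1 / 2 ^ N) * 2 ^ N := by field_simp
          have hdle1 : (m:ℝ) / 2 ^ N ≤ 1 := by
            rw [div_le_one hpos]
            exact_mod_cast hmle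
          have hfm : f ((m:ℝ) / 2 ^ N) = (m:ℝ) / 2 ^ N := fdy N m hmle
          have hmono := fmono s ((m:ℝ) / 2 ^ N) hs0 hsled hdle1 hlt
            (by linarith)
          rw [hfm] at hmono
          linarith
        · -- lower bound via floor
          set m := ⌊s * 2 ^ N⌋₊ with hm
          have hmle : m ≤ 2 ^ N := by
            have h1 : (m:ℝ) ≤ s * 2 ^ N := Nat.floor_le (by positivity)
            have h2 : (m:ℝ) ≤ 2 ^ N := by nlinarith
            exact_mod_cast h2
          have hdles : (m:ℝ) / 2 ^ N ≤ s := by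
            rw [div_le_iff₀ hpos]
            exact Nat.floor_le (by positivity)
          have hsltd : s < (m:ℝ) / 2 ^ N + 1 / 2 ^ N := by
            rw [← add_div, lt_div_iff₀ hpos]
            have := Nat.lt_floor_add_one (s * 2 ^ N)
            nlinarith
          have hfm : f ((m:ℝ) / 2 ^ N) = (m:ℝ) / 2 ^ N := fdy N m hmle
          have hmono := fmono ((m:ℝ) / 2 ^ N) s (by positivity) hdles hs1
            (lt_of_le_of_lt hdles hlt) (by linarith)
          rw [hfm] at hmono
          linarith
      have hub : f s ≤ s := by
        apply le_of_forall_pos_le_add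
        intro ε hε
        exact (key ε hε).1
      have hlb : s ≤ f s := by
        apply le_of_forall_pos_le_add
        intro ε hε
        exact (key ε hε).2
      linarith
    -- the half-indicator vectors
    set v : Fin k → (Fin k → ℝ) := fun j i => if i = j then (1/2:ℝ) else 0 with hv
    have vmem : ∀ j, v j ∈ Set.Icc (0 : Fin k → ℝ) 1 := fun j =>
      hmem _ (fun i => by by_cases h : i = j <;> simp [hv, h] <;> norm_num)
             (fun i => by by_cases h : i = j <;> simp [hv, h] <;> norm_num)
    have hMc : M (fun _ : Fin k => (1/2:ℝ)) = 1/2 := fid (1/2) (by norm_num) (by norm_num)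
    have adichot : ∀ j, M (v j) = 0 ∨ M (v j) = 1/2 := by
      intro j
      set w : Fin k → ℝ := fun i => if i = j then (1/4:ℝ) else 0 with hw
      have hvv : v j * v j = w := by
        funext i; by_cases h : i = j <;> simp [hv, hw, h] <;> norm_num
      have hmw : M w = M (v j) * M (v j) := by
        rw [← hvv]; exact hmul _ (vmem j) _ (vmem j)
      have hww : w + w = v j := by
        funext i; by_cases h : i = j <;> simp [hv, hw, h] <;> norm_num
      have hD : MemD k w w := by
        refine ⟨fun i => ?_, fun i => ?_, fun i => ?_⟩ <;>
          by_cases h : i = j <;> simp [hw, h] <;> norm_num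
      have hVadd : M (v j) = M w + M w := by rw [← hww]; exact hadd w w hD
      have hquad : M (v j) = M (v j) * M (v j) + M (v j) * M (v j) := by
        rw [← hmw]; exact hVadd
      have hfac : M (v j) * (2 * M (v j) - 1) = 0 := by linear_combination -hquad
      rcases mul_eq_zero.mp hfac with h | h
      · exact Or.inl h
      · right; linarith
    have hsum_apply : ∀ (s : Finset (Fin k)) (i : Fin k),
        (∑ j ∈ s, v j) i = if i ∈ s then (1/2:ℝ) else 0 := by
      intro s i
      rw [Finset.sum_apply]
      simp [hv, Finset.sum_ite_eq]
    have hM0 : M (0 : Fin k → ℝ) = 0 := f0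
    have hMsum : ∀ s : Finset (Fin k), M (∑ j ∈ s, v j) = ∑ j ∈ s, M (v j) := by
      intro s
      induction s using Finset.induction_on with
      | empty => simp [hM0]
      | insert j s hnotin ih =>
        rw [Finset.sum_insert hnotin, Finset.sum_insert hnotin, ← ih]
        apply hadd
        refine ⟨fun i => ?_, fun i => ?_, fun i => ?_⟩
        · by_cases h : i = j <;> simp [hv, h] <;> norm_num
        · rw [hsum_apply]; split <;> norm_num
        · have hs := hsum_apply s i
          simp only [Pi.add_apply, hs, Pi.one_apply]
          by_cases h : i = j <;> by_cases h2 : i ∈ s <;>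
            simp [hv, h, h2, hnotin] <;> norm_num
    have hsumhalf : ∑ j, M (v j) = 1/2 := by
      have h1 : (∑ j : Fin k, v j) = (fun _ : Fin k => (1/2:ℝ)) := by
        funext i; rw [hsum_apply]; simp
      have h2 := hMsum Finset.univ
      rw [h1, hMc] at h2
      linarith
    have hex : ∃ j : Fin k, M (v j) ≠ 0 := by
      by_contra h
      push_neg at h
      have : ∑ j, M (v j) = 0 := Finset.sum_eq_zero (fun j _ => h j)
      rw [this] at hsumhalf; norm_num at hsumhalf
    obtain ⟨j, hj⟩ := hex
    have haj : M (v j) = 1/2 := by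
      rcases adichot j with h | h
      · exact absurd h hj
      · exact h
    -- the complement vector u
    set u : Fin k → ℝ := fun i => if i = j then 0 else (1/2:ℝ) with hu
    have hvu : v j + u = fun _ : Fin k => (1/2:ℝ) := by
      funext i; by_cases h : i = j <;> simp [hv, hu, h]
    have hDvu : MemD k (v j) u := by
      refine ⟨fun i => ?_, fun i => ?_, fun i => ?_⟩ <;>
        by_cases h : i = j <;> simp [hv, hu, h] <;> norm_num
    have hMu : M u = 0 := by
      have h2 := hadd (v j) u hDvu
      rw [hvu, hMc, haj] at h2
      linarith
    -- monotonicity on [0, 1/2]^k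
    have hmono : ∀ x y : Fin k → ℝ, (∀ i, 0 ≤ x i) → (∀ i, x i ≤ y i) →
        (∀ i, y i ≤ 1/2) → M x ≤ M y := by
      intro x y hx0 hxy hy
      have hD : MemD k x (y - x) := by
        refine ⟨fun i => ?_, fun i => ?_, fun i => ?_⟩
        · exact ⟨hx0 i, by have := hxy i; have := hy i; linarith⟩
        · have := hxy i; have := hy i; have := hx0 i
          constructor <;> simp only [Pi.sub_apply] <;> linarith
        · have := hy i
          simp only [Pi.add_apply, Pi.sub_apply, Pi.one_apply]
          linarith
      have h2 := hadd x (y - x) hD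
      have hxyx : x + (y - x) = y := by funext i; simp
      rw [hxyx] at h2
      have hn := hnonneg (y - x) (hmem _
        (fun i => by have := hxy i; simp only [Pi.sub_apply]; linarith)
        (fun i => by have := hy i; have := hx0 i; simp only [Pi.sub_apply]; linarith))
      linarith
    have claimZ : ∀ w : Fin k → ℝ, (∀ i, 0 ≤ w i) → (∀ i, w i ≤ 1/2) → w j = 0 →
        M w = 0 := by
      intro w h0 h1 hj0
      have hle : M w ≤ M u := by
        apply hmono w u h0
        · intro i
          by_cases h : i = j
          · rw [h, hj0]; simp [hu]
          · simp only [hu, h, if_neg h]; linarith [h1 i]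
        · intro i; simp only [hu]; split <;> norm_num
      have hge := hnonneg w (hmem w h0 (fun i => le_trans (h1 i) (by norm_num)))
      linarith [hMu]
    have claimA : ∀ t : ℝ, 0 ≤ t → t ≤ 1/2 →
        M (fun i => if i = j then t else 0) = t := by
      intro t h0 h1
      have hprod : (fun _ : Fin k => 2*t) * v j = fun i => if i = j then t else 0 := by
        funext i; by_cases h : i = j <;> simp [hv, h] <;> ring
      have h2 := hmul (fun _ => 2*t) (cmem (t := 2*t) (by linarith) (by linarith)) (v j) (vmem j)
      rw [hprod] at h2
      have hf2t : M (fun _ : Fin k => 2*t) = 2*t := fid (2*t) (by linarith) (by linarith)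
      rw [h2, hf2t, haj]; ring
    have claimHalf : ∀ x : Fin k → ℝ, (∀ i, 0 ≤ x i) → (∀ i, x i ≤ 1/2) →
        M x = x j := by
      intro x h0 h1
      set w : Fin k → ℝ := fun i => if i = j then 0 else x i with hw
      set vx : Fin k → ℝ := fun i => if i = j then x j else 0 with hvx
      have hsplit : vx + w = x := by
        funext i; by_cases h : i = j <;> simp [hw, hvx, h]
      have hD : MemD k vx w := by
        refine ⟨fun i => ?_, fun i => ?_, fun i => ?_⟩
        · by_cases h : i = j
          · simp only [hvx, if_pos h]
            exact ⟨h0 j, by have := h1 j; linarith⟩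
          · simp only [hvx, if_neg h]
            norm_num
        · by_cases h : i = j
          · simp only [hw, if_pos h]
            norm_num
          · simp only [hw, if_neg h]
            exact ⟨h0 i, by have := h1 i; linarith⟩
        · simp only [Pi.add_apply, Pi.one_apply, hvx, hw]
          by_cases h : i = j
          · rw [if_pos h, if_pos h]; have := h1 j; linarith
          · rw [if_neg h, if_neg h]; have := h1 i; linarith
      have h2 := hadd vx w hD
      rw [hsplit] at h2
      have hZ : M w = 0 := by
        apply claimZ w
        · intro i; simp only [hw]; split
          · norm_num
          · exact h0 i
        · intro i; simp only [hw]; split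
          · norm_num
          · exact h1 i
        · simp [hw]
      have hA : M vx = x j := claimA (x j) (h0 j) (h1 j)
      rw [h2, hA, hZ, add_zero]
    refine ⟨j, ?_⟩
    intro x hx
    have h0 : ∀ i, 0 ≤ x i := fun i => hx.1 i
    have h1 : ∀ i, x i ≤ 1 := fun i => hx.2 i
    have hmulx := hmul x hx (fun _ => (1/2:ℝ)) (cmem (by norm_num) (by norm_num))
    have hz : M (x * fun _ => (1/2:ℝ)) = x j * (1/2) :=
      claimHalf (fun i => x i * (1/2))
        (fun i => by have := h0 i; linarith)
        (fun i => by have := h1 i; linarith)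
    rw [hz, hMc] at hmulx
    linarith
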